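/- After the forward pass of the ToFullMag algorithm (iterating over pairs (i,i+1) for i = 1,…,n−1, each time adding tools from M_i to M_{i+1} while |M_{i+1}| < C), the final state satisfies |L'_n| = C, provided m = |∪_{i=1}^n T_i| ≥ C. -/

import Mathlib

def fillFrom (C : ℕ) (src dst : Finset ℕ) : Finset ℕ :=
  dst ∪ (((src \ dst).sort (· ≤ ·)).take (C - dst.card)).toFinset

def passPairs (C : ℕ) (pairs : List (ℕ × ℕ)) (L : ℕ → Finset ℕ) : ℕ → Finset ℕ :=
  pairs.foldl (fun M p => Function.update M p.2 (fillFrom C (M p.1) (M p.2))) L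

def fwdPairs (n : ℕ) : List (ℕ × ℕ) := (List.range (n - 1)).map (fun i => (i + 1, i + 2))

def bwdPairs (n : ℕ) : List (ℕ × ℕ) := (List.range (n - 1)).map (fun i => (n - i, n - i - 1))

def toFullMag (C n : ℕ) (L : ℕ → Finset ℕ) : ℕ → Finset ℕ :=
  passPairs C (bwdPairs n) (passPairs C (fwdPairs n) L)

def addRange (t s e : ℕ) (M : ℕ → Finset ℕ) : ℕ → Finset ℕ :=
  fun i => if s < i ∧ i < e then insert t (M i) else M i

def gpcaStep (C : ℕ) (T : ℕ → Finset ℕ) (e : ℕ) (M : ℕ → Finset ℕ) (t : ℕ) : ℕ → Finset ℕ :=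
  match ((List.range e).filter (fun s => decide (t ∈ T s))).max? with
  | none => M
  | some s => if ∀ i ∈ Finset.Ioo s e, (M i).card < C then addRange t s e M else M

def GPCA (C n : ℕ) (T : ℕ → Finset ℕ) : ℕ → Finset ℕ :=
  (List.range n).foldl
    (fun M e => ((T (e + 1)).sort (· ≤ ·)).foldl (gpcaStep C T (e + 1)) M) T

lemma fillFrom_cases (C : ℕ) (src dst : Finset ℕ) (h : dst.card ≤ C) :
    (fillFrom C src dst).card ≤ C ∧
      ((fillFrom C src dst).card = C ∨ src ⊆ fillFrom C src dst) := by
  unfold fillFrom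
  set l := (src \ dst).sort (· ≤ ·) with hl
  set m := C - dst.card with hm
  have hnodup : l.Nodup := Finset.sort_nodup _ _
  have htn : (l.take m).Nodup := hnodup.sublist (List.take_sublist m l)
  have hsub : (l.take m).toFinset ⊆ src \ dst := by
    intro x hx
    rw [List.mem_toFinset] at hx
    have := List.take_subset m l hx
    rwa [hl, Finset.mem_sort] at this
  have hdisj : Disjoint dst (l.take m).toFinset := by
    refine Finset.disjoint_left.mpr fun x hx hx' => ?_
    exact (Finset.mem_sdiff.mp (hsub hx')).2 hx
  have hcard : (dst ∪ (l.take m).toFinset).card = dst.card + (l.take m).length := by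
    rw [Finset.card_union_of_disjoint hdisj, List.toFinset_card_of_nodup htn]
  have hlen : (l.take m).length = min m l.length := List.length_take
  constructor
  · rw [hcard, hlen]; omega
  · by_cases hc : m ≤ l.length
    · left; rw [hcard, hlen]; omega
    · right
      have htake : l.take m = l := List.take_of_length_le (by omega)
      intro x hx
      by_cases hxd : x ∈ dst
      · exact Finset.mem_union_left _ hxd
      · apply Finset.mem_union_right
        rw [htake, List.mem_toFinset, hl, Finset.mem_sort]
        exact Finset.mem_sdiff.mpr ⟨hx, hxd⟩

lemma dst_subset_fillFrom (C : ℕ) (src dst : Finset ℕ) : dst ⊆ fillFrom C src dst :=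
  Finset.subset_union_left

def pairsUpTo (k : ℕ) : List (ℕ × ℕ) := (List.range k).map (fun i => (i + 1, i + 2))

lemma pairsUpTo_succ (k : ℕ) :
    pairsUpTo (k + 1) = pairsUpTo k ++ [(k + 1, k + 2)] := by
  simp [pairsUpTo, List.range_succ]

lemma passPairs_append (C : ℕ) (p q : List (ℕ × ℕ)) (L : ℕ → Finset ℕ) :
    passPairs C (p ++ q) L = passPairs C q (passPairs C p L) := by
  simp [passPairs, List.foldl_append]

lemma passPairs_stable (C k j : ℕ) (L : ℕ → Finset ℕ) (hj : k + 2 ≤ j) :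
    passPairs C (pairsUpTo k) L j = L j := by
  induction k with
  | zero => rfl
  | succ k ih =>
    rw [pairsUpTo_succ, passPairs_append]
    have hne : j ≠ k + 2 := by omega
    simp only [passPairs, List.foldl_cons, List.foldl_nil]
    rw [Function.update_of_ne hne]
    exact ih (by omega)

lemma fwd_invariant (C n : ℕ) (T L : ℕ → Finset ℕ)
    (hfeas : ∀ i ∈ Finset.Icc 1 n, T i ⊆ L i ∧ (L i).card ≤ C) :
    ∀ k, k + 1 ≤ n →
      (passPairs C (pairsUpTo k) L (k + 1)).card ≤ C ∧
        ((passPairs C (pairsUpTo k) L (k + 1)).card = C ∨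
          (Finset.Icc 1 (k + 1)).biUnion T ⊆ passPairs C (pairsUpTo k) L (k + 1)) := by
  intro k
  induction k with
  | zero =>
    intro hk
    obtain ⟨h1, h2⟩ := hfeas 1 (by simp [Finset.mem_Icc]; omega)
    refine ⟨h2, Or.inr ?_⟩
    intro x hx
    simp only [Finset.mem_biUnion, Finset.mem_Icc] at hx
    obtain ⟨i, hi, hxi⟩ := hx
    have : i = 1 := by omega
    exact h1 (this ▸ hxi)
  | succ k ih =>
    intro hk
    obtain ⟨ih1, ih2⟩ := ih (by omega)
    obtain ⟨hT2, hL2⟩ := hfeas (k + 2) (by simp [Finset.mem_Icc]; omega)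
    set M := passPairs C (pairsUpTo k) L with hM
    have hstable : M (k + 2) = L (k + 2) := passPairs_stable C k (k + 2) L le_rfl
    have hstep : passPairs C (pairsUpTo (k + 1)) L (k + 2) =
        fillFrom C (M (k + 1)) (L (k + 2)) := by
      rw [pairsUpTo_succ, passPairs_append]
      simp only [passPairs, List.foldl_cons, List.foldl_nil]
      rw [Function.update_self]
      show fillFrom C (M (k + 1)) (M (k + 2)) = _
      rw [hstable]
    rw [hstep]
    obtain ⟨hc1, hc2⟩ := fillFrom_cases C (M (k + 1)) (L (k + 2)) hL2
    refine ⟨hc1, ?_⟩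
    rcases hc2 with hc2 | hc2
    · exact Or.inl hc2
    · rcases ih2 with hcC | hunion
      · -- src has card C, so fillFrom has card ≥ C
        left
        have : C ≤ (fillFrom C (M (k + 1)) (L (k + 2))).card := by
          calc C = (M (k + 1)).card := hcC.symm
            _ ≤ _ := Finset.card_le_card hc2
        omega
      · right
        intro x hx
        simp only [Finset.mem_biUnion, Finset.mem_Icc] at hx
        obtain ⟨i, hi, hxi⟩ := hx
        by_cases hik : i ≤ k + 1
        · apply hc2
          apply hunion
          simp only [Finset.mem_biUnion, Finset.mem_Icc]
          exact ⟨i, ⟨hi.1, hik⟩, hxi⟩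
        · have : i = k + 2 := by omega
          exact dst_subset_fillFrom C _ _ (hT2 (this ▸ hxi))

/-- After the forward pass of ToFullMag (pairs (1,2),…,(n−1,n), each filling the second
state from the first while below capacity), the last magazine state is full, provided
`m = |⋃ T i| ≥ C`. -/
theorem fwd_pass_last_full (n C : ℕ) (T L : ℕ → Finset ℕ) (hn : 1 ≤ n)
    (hfeas : ∀ i ∈ Finset.Icc 1 n, T i ⊆ L i ∧ (L i).card ≤ C)
    (hm : C ≤ ((Finset.Icc 1 n).biUnion T).card) :
    ((passPairs C (fwdPairs n) L) n).card = C := by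
  have hfw : fwdPairs n = pairsUpTo (n - 1) := rfl
  have hn1 : n - 1 + 1 = n := by omega
  obtain ⟨h1, h2⟩ := fwd_invariant C n T L hfeas (n - 1) (by omega)
  rw [hn1] at h1 h2
  rw [hfw]
  rcases h2 with h2 | h2
  · exact h2
  · have := Finset.card_le_card h2
    omega
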